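/- Let w : ℝ → (0,∞) be a continuous 2π-periodic function that is angle-separable and satisfies max w > min w. Then there exists α₀ ∈ ℝ such that w(α₀) = max w, w(α₀+π) = min w, w(α₀ + θ) = w(α₀ − θ) for all θ ∈ ℝ, and the function θ ↦ w(α₀ + θ) is nonincreasing on [0, π]. In other words, the corresponding function on the unit circle is axially symmetric with respect to the diameter through angle α₀ and monotone from the maximum arc to the minimum arc. -/

import Mathlib

open Set intervalIntegral

local notation "π" => Real.pi

/-- Extend evenness from `[0,π]` to all of `ℝ` using `2π`-periodicity. -/
lemma even_extend (u : ℝ → ℝ) (hper : ∀ t, u (t + 2 * π) = u t)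
    (h : ∀ θ ∈ Set.Icc (0:ℝ) π, u θ = u (-θ)) : ∀ θ, u θ = u (-θ) := by
  have per : Function.Periodic u (2 * π) := hper
  have h2π : (0:ℝ) < 2 * π := by positivity
  intro θ
  set n : ℤ := ⌊(θ + π) / (2 * π)⌋ with hn
  set y : ℝ := θ - n * (2 * π) with hy
  have hy1 : -π ≤ y := by
    have := Int.floor_le ((θ + π) / (2 * π))
    rw [le_div_iff₀ h2π] at this
    simp only [hy, hn]; linarith
  have hy2 : y < π := by
    have := Int.lt_floor_add_one ((θ + π) / (2 * π))
    rw [div_lt_iff₀ h2π] at this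
    simp only [hy, hn]; linarith
  have e1 : u θ = u y := by
    have := per.sub_zsmul_eq n (x := θ)
    rw [zsmul_eq_mul] at this
    exact this.symm
  have e2 : u (-θ) = u (-y) := by
    have := per.sub_zsmul_eq (-n) (x := -θ)
    rw [zsmul_eq_mul] at this
    have e : -θ - (-n : ℤ) * (2 * π) = -y := by push_cast; simp only [hy]; ring
    rw [e] at this
    exact this.symm
  have e3 : u y = u (-y) := by
    rcases le_or_gt 0 y with h0 | h0
    · exact h y ⟨h0, hy2.le⟩
    · have := h (-y) ⟨by linarith, by linarith⟩
      simpa using this.symm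
  rw [e1, e2, e3]

/-- Any value of an even `2π`-periodic function is attained on `[0,π]`. -/
lemma reduce (u : ℝ → ℝ) (hper : ∀ t, u (t + 2 * π) = u t)
    (heven : ∀ θ, u θ = u (-θ)) (t : ℝ) : ∃ y ∈ Set.Icc (0:ℝ) π, u t = u y := by
  have per : Function.Periodic u (2 * π) := hper
  have h2π : (0:ℝ) < 2 * π := by positivity
  obtain ⟨y, hy, hty⟩ := per.exists_mem_Ico h2π t (-π)
  have hy' : y ∈ Set.Ico (-π) π := by
    rw [show -π + 2 * π = π by ring] at hy; exact hy
  rcases le_or_gt 0 y with h0 | h0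
  · exact ⟨y, ⟨h0, hy'.2.le⟩, hty⟩
  · exact ⟨-y, ⟨by linarith, by linarith [hy'.1]⟩, by rw [hty, heven y]⟩

noncomputable def Phi (w : ℝ → ℝ) (α : ℝ) : ℝ :=
  ∫ θ in (0:ℝ)..π, (w (α + θ) - w (α - θ))

lemma Phi_eq (w : ℝ → ℝ) (hcont : Continuous w) (α : ℝ) :
    Phi w α = (∫ t in α..(α+π), w t) - ∫ t in (α-π)..α, w t := by
  unfold Phi
  rw [integral_sub ((by fun_prop : Continuous fun θ : ℝ => w (α + θ)).intervalIntegrable 0 π)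
    ((by fun_prop : Continuous fun θ : ℝ => w (α - θ)).intervalIntegrable 0 π)]
  congr 1
  · have := integral_comp_add_left (f := w) (a := (0:ℝ)) (b := π) α
    simpa using this
  · have := integral_comp_sub_left (f := w) (a := (0:ℝ)) (b := π) α
    simpa using this

lemma Phi_cont (w : ℝ → ℝ) (hcont : Continuous w) : Continuous (Phi w) := by
  have hint : ∀ a b : ℝ, IntervalIntegrable w MeasureTheory.volume a b :=
    fun a b => hcont.intervalIntegrable a b
  have Gc : Continuous (fun x => ∫ t in (0:ℝ)..x, w t) :=
    intervalIntegral.continuous_primitive hint 0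
  have key : ∀ a b : ℝ, (∫ t in a..b, w t) =
      (∫ t in (0:ℝ)..b, w t) - ∫ t in (0:ℝ)..a, w t := by
    intro a b
    rw [intervalIntegral.integral_interval_sub_left (hint 0 b) (hint 0 a)]
  have : Continuous (fun α => (((fun x => ∫ t in (0:ℝ)..x, w t) (α+π)
      - (fun x => ∫ t in (0:ℝ)..x, w t) α))
      - (((fun x => ∫ t in (0:ℝ)..x, w t) α - (fun x => ∫ t in (0:ℝ)..x, w t) (α-π)))) := by
    fun_prop
  refine this.congr fun α => ?_
  rw [Phi_eq w hcont α]
  simp only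
  rw [key α (α+π), key (α-π) α]

lemma Phi_anti (w : ℝ → ℝ) (hcont : Continuous w) (hper : ∀ t, w (t + 2 * π) = w t) (α : ℝ) :
    Phi w (α + π) = - Phi w α := by
  have shift : (∫ t in (α-π)..α, w t) = ∫ t in (α+π)..(α+π+π), w t := by
    have := integral_comp_add_right (f := w) (a := α - π) (b := α) (2 * π)
    have e : (fun x => w (x + 2*π)) = w := by funext x; exact hper x
    rw [e] at this
    rw [this]
    congr 1 <;> ring
  have shift2 : (∫ t in α..(α+π), w t) = ∫ t in (α+π-π)..(α+π), w t := by
    congr 1; ring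
  rw [Phi_eq w hcont, Phi_eq w hcont, ← shift, shift2]
  ring


/-- the integrand vanishes at `π` by periodicity -/
lemma endpt (w : ℝ → ℝ) (hper : ∀ t, w (t + 2 * π) = w t) (α : ℝ) :
    w (α + π) = w (α - π) := by
  have := hper (α - π)
  rw [show α - π + 2 * π = α + π by ring] at this
  exact this

lemma Phi_pos (w : ℝ → ℝ) (hcont : Continuous w) (hper : ∀ t, w (t + 2 * π) = w t)
    (hsep : ∀ α : ℝ,
      (∀ θ ∈ Set.Ioo (0 : ℝ) π, w (α - θ) ≤ w (α + θ)) ∨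
      (∀ θ ∈ Set.Ioo (0 : ℝ) π, w (α + θ) ≤ w (α - θ)))
    (s : ℝ) (φ₀ : ℝ) (hφ₀ : φ₀ ∈ Set.Ioo (0:ℝ) π) (hlt : w (s - φ₀) < w (s + φ₀)) :
    0 < Phi w s := by
  have hbr : ∀ θ ∈ Set.Ioo (0 : ℝ) π, w (s - θ) ≤ w (s + θ) := by
    rcases hsep s with h | h
    · exact h
    · exact absurd (h φ₀ hφ₀) (not_le.mpr hlt)
  unfold Phi
  apply intervalIntegral.integral_pos Real.pi_pos
  · fun_prop
  · intro x hx
    rcases lt_or_eq_of_le hx.2 with h | h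
    · have := hbr x ⟨hx.1, h⟩; linarith
    · rw [h, endpt w hper s]; simp
  · exact ⟨φ₀, ⟨hφ₀.1.le, hφ₀.2.le⟩, by linarith⟩

lemma Phi_neg (w : ℝ → ℝ) (hcont : Continuous w) (hper : ∀ t, w (t + 2 * π) = w t)
    (hsep : ∀ α : ℝ,
      (∀ θ ∈ Set.Ioo (0 : ℝ) π, w (α - θ) ≤ w (α + θ)) ∨
      (∀ θ ∈ Set.Ioo (0 : ℝ) π, w (α + θ) ≤ w (α - θ)))
    (s : ℝ) (φ₀ : ℝ) (hφ₀ : φ₀ ∈ Set.Ioo (0:ℝ) π) (hlt : w (s + φ₀) < w (s - φ₀)) :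
    Phi w s < 0 := by
  have hbr : ∀ θ ∈ Set.Ioo (0 : ℝ) π, w (s + θ) ≤ w (s - θ) := by
    rcases hsep s with h | h
    · exact absurd (h φ₀ hφ₀) (not_le.mpr hlt)
    · exact h
  have : 0 < ∫ θ in (0:ℝ)..π, (w (s - θ) - w (s + θ)) := by
    apply intervalIntegral.integral_pos Real.pi_pos
    · fun_prop
    · intro x hx
      rcases lt_or_eq_of_le hx.2 with h | h
      · have := hbr x ⟨hx.1, h⟩; linarith
      · rw [h, endpt w hper s]; simp
    · exact ⟨φ₀, ⟨hφ₀.1.le, hφ₀.2.le⟩, by linarith⟩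
  have e : ∫ θ in (0:ℝ)..π, (w (s - θ) - w (s + θ))
      = - Phi w s := by
    unfold Phi
    rw [← intervalIntegral.integral_neg]
    congr 1; funext θ; ring
  rw [e] at this; linarith


lemma symm_of_zero (w : ℝ → ℝ) (hcont : Continuous w) (hper : ∀ t, w (t + 2 * π) = w t)
    (hsep : ∀ α : ℝ,
      (∀ θ ∈ Set.Ioo (0 : ℝ) π, w (α - θ) ≤ w (α + θ)) ∨
      (∀ θ ∈ Set.Ioo (0 : ℝ) π, w (α + θ) ≤ w (α - θ)))
    (α : ℝ) (h0 : Phi w α = 0) : ∀ θ, w (α + θ) = w (α - θ) := by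
  have hIcc : ∀ θ ∈ Set.Icc (0:ℝ) π, w (α + θ) = w (α - θ) := by
    intro θ hθ
    rcases eq_or_lt_of_le hθ.1 with h | h1
    · rw [← h]; norm_num
    rcases eq_or_lt_of_le hθ.2 with h | h2
    · rw [h]; exact endpt w hper α
    rcases lt_trichotomy (w (α + θ)) (w (α - θ)) with h | h | h
    · have := Phi_neg w hcont hper hsep α θ ⟨h1, h2⟩ h
      linarith
    · exact h
    · have := Phi_pos w hcont hper hsep α θ ⟨h1, h2⟩ h
      linarith
  have hv : ∀ θ, w (α + θ) = w (α + -θ) := by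
    apply even_extend (fun θ => w (α + θ))
    · intro t; show w (α + (t + 2*π)) = _; rw [← add_assoc]; exact hper (α + t)
    · intro θ hθ
      show w (α + θ) = w (α + -θ)
      rw [← sub_eq_add_neg]
      exact hIcc θ hθ
  intro θ
  rw [hv θ, sub_eq_add_neg]

lemma no_small_period (u : ℝ → ℝ)
    (hsep : ∀ s : ℝ,
      (∀ θ ∈ Set.Ioo (0 : ℝ) π, u (s - θ) ≤ u (s + θ)) ∨
      (∀ θ ∈ Set.Ioo (0 : ℝ) π, u (s + θ) ≤ u (s - θ)))
    (hper : ∀ t, u (t + 2 * π) = u t)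
    (T : ℝ) (hT0 : 0 < T) (hT2 : T < 2 * π) (hperT : ∀ t, u (t + T) = u t)
    (a b : ℝ) (hab : a < b) (hv : u b < u a) : False := by
  set T' : ℝ := min T (2 * π - T) with hT'
  have hT'0 : 0 < T' := lt_min hT0 (by linarith)
  have hT'π : T' ≤ π := by
    rcases le_total T (2 * π - T) with h | h
    · rw [hT', min_eq_left h]; linarith
    · rw [hT', min_eq_right h]; linarith
  have hperT' : ∀ t, u (t + T') = u t := by
    intro t
    rcases le_total T (2 * π - T) with h | h
    · rw [hT', min_eq_left h]; exact hperT t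
    · rw [hT', min_eq_right h]
      have h1 := hperT (t + (2 * π - T))
      rw [show t + (2 * π - T) + T = t + 2 * π by ring, hper t] at h1
      exact h1.symm
  have per' : Function.Periodic u T' := hperT'
  set k : ℤ := ⌊(b - a) / T'⌋ + 1 with hk
  have hk1 : (b - a) / T' < (k : ℝ) := by
    rw [hk]; push_cast; exact Int.lt_floor_add_one _
  have hk2 : ((k : ℝ) - 1) ≤ (b - a) / T' := by
    rw [hk]; push_cast; simp only [add_sub_cancel_right]; exact Int.floor_le _
  set δ : ℝ := a + k * T' - b with hδ
  have hδ0 : 0 < δ := by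
    rw [hδ]
    have := (div_lt_iff₀ hT'0).mp hk1
    linarith
  have hδT' : δ ≤ T' := by
    rw [hδ]
    have := (le_div_iff₀ hT'0).mp hk2
    linarith
  have hval : u (a + k * T') = u a := by
    have := per'.zsmul k a
    rwa [zsmul_eq_mul] at this
  have hval' : u (a + (k - 1) * T') = u a := by
    have := per'.zsmul (k - 1) a
    rw [zsmul_eq_mul] at this
    push_cast at this
    exact this
  set s : ℝ := b + δ / 2 with hs
  have hbT : u (b + T') = u b := hperT' b
  rcases hsep s with h | h
  · have hφ₂ : T' - δ / 2 ∈ Set.Ioo (0:ℝ) π := ⟨by linarith, by linarith⟩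
    have := h (T' - δ / 2) hφ₂
    rw [show s - (T' - δ / 2) = a + ((k:ℝ) - 1) * T' by rw [hs, hδ]; ring,
        show s + (T' - δ / 2) = b + T' by rw [hs]; ring, hval', hbT] at this
    linarith
  · have hφ₁ : δ / 2 ∈ Set.Ioo (0:ℝ) π := ⟨by linarith, by linarith⟩
    have := h (δ / 2) hφ₁
    rw [show s + δ / 2 = a + (k:ℝ) * T' by rw [hs, hδ]; ring,
        show s - δ / 2 = b by rw [hs]; ring, hval] at this
    linarith


lemma mono_of_even (u : ℝ → ℝ) (hcont : Continuous u) (hper : ∀ t, u (t + 2 * π) = u t)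
    (heven : ∀ θ, u θ = u (-θ))
    (hsep : ∀ s : ℝ,
      (∀ θ ∈ Set.Ioo (0 : ℝ) π, u (s - θ) ≤ u (s + θ)) ∨
      (∀ θ ∈ Set.Ioo (0 : ℝ) π, u (s + θ) ≤ u (s - θ))) :
    MonotoneOn u (Set.Icc 0 π) ∨ AntitoneOn u (Set.Icc 0 π) := by
  by_contra hcon
  push_neg at hcon
  obtain ⟨hm, hA⟩ := hcon
  simp only [MonotoneOn, not_forall] at hm
  obtain ⟨a, ha, b, hb, hab, hba⟩ := hm
  rw [not_le] at hba
  have hab' : a < b := lt_of_le_of_ne hab (by rintro rfl; exact lt_irrefl _ hba)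
  simp only [AntitoneOn, not_forall] at hA
  obtain ⟨c, hc, d, hd, hcd, hdc⟩ := hA
  rw [not_le] at hdc
  have hcd' : c < d := lt_of_le_of_ne hcd (by rintro rfl; exact lt_irrefl _ hdc)
  set s₁ : ℝ := (a + b) / 2 with hs₁
  set s₂ : ℝ := (c + d) / 2 with hs₂
  have hs₁mem : 0 < s₁ ∧ s₁ < π := ⟨by rw [hs₁]; nlinarith [ha.1, hb.2], by rw [hs₁]; nlinarith [ha.1, hb.2]⟩
  have hs₂mem : 0 < s₂ ∧ s₂ < π := ⟨by rw [hs₂]; nlinarith [hc.1, hd.2], by rw [hs₂]; nlinarith [hc.1, hd.2]⟩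
  have hPhi1 : Phi u s₁ < 0 := by
    apply Phi_neg u hcont hper hsep s₁ ((b - a) / 2)
      ⟨by linarith, by nlinarith [ha.1, hb.2]⟩
    rw [show s₁ + (b - a) / 2 = b by rw [hs₁]; ring, show s₁ - (b - a) / 2 = a by rw [hs₁]; ring]
    exact hba
  have hPhi2 : 0 < Phi u s₂ := by
    apply Phi_pos u hcont hper hsep s₂ ((d - c) / 2)
      ⟨by linarith, by nlinarith [hc.1, hd.2]⟩
    rw [show s₂ + (d - c) / 2 = d by rw [hs₂]; ring, show s₂ - (d - c) / 2 = c by rw [hs₂]; ring]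
    exact hdc
  have hsub := intermediate_value_uIcc (f := Phi u) (a := s₁) (b := s₂)
    ((Phi_cont u hcont).continuousOn)
  have h0mem : (0:ℝ) ∈ Set.uIcc (Phi u s₁) (Phi u s₂) := by
    rw [Set.mem_uIcc]; left; exact ⟨hPhi1.le, hPhi2.le⟩
  obtain ⟨s', hs'mem, hs'0⟩ := hsub h0mem
  have hs' : 0 < s' ∧ s' < π := by
    rw [Set.mem_uIcc] at hs'mem
    rcases hs'mem with ⟨h1, h2⟩ | ⟨h1, h2⟩
    · exact ⟨lt_of_lt_of_le hs₁mem.1 h1, lt_of_le_of_lt h2 hs₂mem.2⟩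
    · exact ⟨lt_of_lt_of_le hs₂mem.1 h1, lt_of_le_of_lt h2 hs₁mem.2⟩
  have hsym := symm_of_zero u hcont hper hsep s' hs'0
  have hT : ∀ t, u (t + 2 * s') = u t := by
    intro t
    have h1 := hsym (s' + t)
    rw [show s' + (s' + t) = t + 2 * s' by ring, show s' - (s' + t) = -t by ring] at h1
    rw [h1]; exact (heven t).symm
  exact no_small_period u hsep hper (2 * s') (by linarith [hs'.1]) (by linarith [hs'.2]) hT
    a b hab' hba


/-- A continuous, positive, 2π-periodic, angle-separable, nonconstant
function `w` is axially symmetric about some angle `α₀` at which it attains its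
maximum (with minimum at the antipodal angle), and is nonincreasing from the
maximum to the minimum. -/
theorem stmt_2 (w : ℝ → ℝ)
    (hpos : ∀ t, 0 < w t)
    (hcont : Continuous w)
    (hper : ∀ t, w (t + 2 * Real.pi) = w t)
    (hsep : ∀ α : ℝ,
      (∀ θ ∈ Set.Ioo (0 : ℝ) Real.pi, w (α - θ) ≤ w (α + θ)) ∨
      (∀ θ ∈ Set.Ioo (0 : ℝ) Real.pi, w (α + θ) ≤ w (α - θ)))
    (hnc : ∃ s t : ℝ, w s < w t) :
    ∃ α₀ : ℝ,
      (∀ t, w t ≤ w α₀) ∧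
      (∀ t, w (α₀ + Real.pi) ≤ w t) ∧
      (∀ θ : ℝ, w (α₀ + θ) = w (α₀ - θ)) ∧
      AntitoneOn (fun θ => w (α₀ + θ)) (Set.Icc 0 Real.pi) := by
  -- Step 1: find a symmetry axis via the intermediate value theorem
  obtain ⟨α, hα⟩ : ∃ α : ℝ, Phi w α = 0 := by
    have hc := (Phi_cont w hcont).continuousOn (s := Set.uIcc (0:ℝ) π)
    have hanti := Phi_anti w hcont hper 0
    rw [zero_add] at hanti
    rcases le_total (Phi w 0) 0 with h | h
    · have h0 : (0:ℝ) ∈ Set.uIcc (Phi w 0) (Phi w π) := by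
        rw [Set.mem_uIcc]; left; exact ⟨h, by rw [hanti]; linarith⟩
      obtain ⟨α, _, hα⟩ := intermediate_value_uIcc hc h0
      exact ⟨α, hα⟩
    · have h0 : (0:ℝ) ∈ Set.uIcc (Phi w 0) (Phi w π) := by
        rw [Set.mem_uIcc]; right; exact ⟨by rw [hanti]; linarith, h⟩
      obtain ⟨α, _, hα⟩ := intermediate_value_uIcc hc h0
      exact ⟨α, hα⟩
  have hsym := symm_of_zero w hcont hper hsep α hα
  -- Step 2: the translated function u is even
  set u : ℝ → ℝ := fun t => w (α + t) with hu
  have hucont : Continuous u := by fun_prop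
  have huper : ∀ t, u (t + 2 * π) = u t := by
    intro t; show w (α + (t + 2 * π)) = w (α + t)
    rw [← add_assoc]; exact hper (α + t)
  have hueven : ∀ θ, u θ = u (-θ) := by
    intro θ; show w (α + θ) = w (α + -θ)
    rw [← sub_eq_add_neg]; exact hsym θ
  have husep : ∀ s : ℝ,
      (∀ θ ∈ Set.Ioo (0 : ℝ) π, u (s - θ) ≤ u (s + θ)) ∨
      (∀ θ ∈ Set.Ioo (0 : ℝ) π, u (s + θ) ≤ u (s - θ)) := by
    intro s
    rcases hsep (α + s) with h | h
    · left; intro θ hθ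
      have := h θ hθ
      rwa [add_sub_assoc, add_assoc] at this
    · right; intro θ hθ
      have := h θ hθ
      rwa [add_sub_assoc, add_assoc] at this
  have hured : ∀ t, ∃ y ∈ Set.Icc (0:ℝ) π, w t = u y := by
    intro t
    obtain ⟨y, hy, hy'⟩ := reduce u huper hueven (t - α)
    refine ⟨y, hy, ?_⟩
    rw [← hy']; show w t = w (α + (t - α)); congr 1; ring
  have h0mem : (0:ℝ) ∈ Set.Icc (0:ℝ) π := ⟨le_refl _, Real.pi_pos.le⟩
  have hπmem : π ∈ Set.Icc (0:ℝ) π := ⟨Real.pi_pos.le, le_refl _⟩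
  -- Step 3: u is monotone or antitone on [0, π]
  rcases mono_of_even u hucont huper hueven husep with hmono | hanti
  · -- monotone case: take α₀ = α + π
    refine ⟨α + π, ?_, ?_, ?_, ?_⟩
    · intro t
      obtain ⟨y, hy, hy'⟩ := hured t
      rw [hy']
      show u y ≤ w (α + π)
      exact hmono hy hπmem hy.2
    · intro t
      obtain ⟨y, hy, hy'⟩ := hured t
      rw [hy']
      show w (α + π + π) ≤ u y
      have e : w (α + π + π) = u 0 := by
        show w (α + π + π) = w (α + 0)
        rw [show α + π + π = α + 0 + 2 * π by ring]
        exact hper (α + 0)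
      rw [e]
      exact hmono h0mem hy hy.1
    · intro θ
      have hflip : u (π + θ) = u (π - θ) := by
        rw [hueven (π + θ)]
        have := huper (-(π + θ))
        rw [show -(π + θ) + 2 * π = π - θ by ring] at this
        exact this.symm
      show w (α + π + θ) = w (α + π - θ)
      calc w (α + π + θ) = u (π + θ) := by rw [hu]; congr 1; ring
        _ = u (π - θ) := hflip
        _ = w (α + π - θ) := by rw [hu]; congr 1; ring
    · intro x hx y hy hxy
      simp only
      have ex : w (α + π + x) = u (π - x) := by
        have hflip : u (π + x) = u (π - x) := by
          rw [hueven (π + x)]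
          have := huper (-(π + x))
          rw [show -(π + x) + 2 * π = π - x by ring] at this
          exact this.symm
        rw [← hflip, hu]; congr 1; ring
      have ey : w (α + π + y) = u (π - y) := by
        have hflip : u (π + y) = u (π - y) := by
          rw [hueven (π + y)]
          have := huper (-(π + y))
          rw [show -(π + y) + 2 * π = π - y by ring] at this
          exact this.symm
        rw [← hflip, hu]; congr 1; ring
      rw [ex, ey]
      exact hmono ⟨by linarith [hy.2], by linarith [hy.1]⟩
        ⟨by linarith [hx.2], by linarith [hx.1]⟩ (by linarith)
  · -- antitone case: take α₀ = α
    refine ⟨α, ?_, ?_, hsym, hanti⟩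
    · intro t
      obtain ⟨y, hy, hy'⟩ := hured t
      rw [hy']
      show u y ≤ w α
      have e : w α = u 0 := by show w α = w (α + 0); rw [add_zero]
      rw [e]
      exact hanti h0mem hy hy.1
    · intro t
      obtain ⟨y, hy, hy'⟩ := hured t
      rw [hy']
      show w (α + π) ≤ u y
      exact hanti hy hπmem hy.2
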